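/- Three-fold reflection closure (Miquel's theorem, algebraic form): let P₁, P₂, P₃ ∈ ℂ be nonzero and pairwise distinct with pairwise distinct conjugate ratios, and let λ₁₂, λ₂₃, λ₃₁ ∈ ℝ. For i ∈ {1,2,3} (indices mod 3) suppose the collinearity condition ((conj(Pᵢ) - conj(P_{i+1}))(P_{i-1} - Pᵢ))/((Pᵢ - P_{i+1})(conj(P_{i-1}) - conj(Pᵢ))) = ((conj(Pᵢ) - λ_{i,i+1}conj(P_{i+1}))(P_{i-1} - λ_{i-1,i}Pᵢ))/((Pᵢ - λ_{i,i+1}P_{i+1})(conj(P_{i-1}) - λ_{i-1,i}conj(Pᵢ))) holds for i = 1 and i = 2 (all denominators nonzero). Then it also holds for i = 3. (Equivalently, the product of the three instances of this equation is the trivial identity 1 = 1.) -/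

import Mathlib

/-- The collinearity (linearity) condition, Equation (85) of the paper, for the
triple (Pprev, Pcur, Pnext) with real parameters lprev, lcur. -/
def lincond (Pprev Pcur Pnext : ℂ) (lprev lcur : ℝ) : Prop :=
  (((starRingEnd ℂ) Pcur - (starRingEnd ℂ) Pnext) * (Pprev - Pcur)) /
      ((Pcur - Pnext) * ((starRingEnd ℂ) Pprev - (starRingEnd ℂ) Pcur)) =
    (((starRingEnd ℂ) Pcur - (lcur : ℂ) * (starRingEnd ℂ) Pnext) *
        (Pprev - (lprev : ℂ) * Pcur)) /
      ((Pcur - (lcur : ℂ) * Pnext) *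
        ((starRingEnd ℂ) Pprev - (lprev : ℂ) * (starRingEnd ℂ) Pcur))

/-- Three-fold reflection closure (algebraic Miquel theorem): the collinearity
conditions for i = 1 and i = 2 imply the one for i = 3. -/
theorem stmt_17 (P₁ P₂ P₃ : ℂ) (l₁₂ l₂₃ l₃₁ : ℝ)
    (h1 : P₁ ≠ 0) (h2 : P₂ ≠ 0) (h3 : P₃ ≠ 0)
    (h12 : P₁ ≠ P₂) (h23 : P₂ ≠ P₃) (h31 : P₃ ≠ P₁)
    (hcr12 : (starRingEnd ℂ) P₁ / P₁ ≠ (starRingEnd ℂ) P₂ / P₂)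
    (hcr23 : (starRingEnd ℂ) P₂ / P₂ ≠ (starRingEnd ℂ) P₃ / P₃)
    (hcr31 : (starRingEnd ℂ) P₃ / P₃ ≠ (starRingEnd ℂ) P₁ / P₁)
    (hd1 : P₁ - (l₁₂ : ℂ) * P₂ ≠ 0)
    (hd2 : P₂ - (l₂₃ : ℂ) * P₃ ≠ 0)
    (hd3 : P₃ - (l₃₁ : ℂ) * P₁ ≠ 0)
    (hd1' : (starRingEnd ℂ) P₃ - (l₃₁ : ℂ) * (starRingEnd ℂ) P₁ ≠ 0)
    (hd2' : (starRingEnd ℂ) P₁ - (l₁₂ : ℂ) * (starRingEnd ℂ) P₂ ≠ 0)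
    (hd3' : (starRingEnd ℂ) P₂ - (l₂₃ : ℂ) * (starRingEnd ℂ) P₃ ≠ 0)
    (hE1 : lincond P₃ P₁ P₂ l₃₁ l₁₂)
    (hE2 : lincond P₁ P₂ P₃ l₁₂ l₂₃) :
    lincond P₂ P₃ P₁ l₂₃ l₃₁ := by
  unfold lincond at hE1 hE2 ⊢
  set q₁ := (starRingEnd ℂ) P₁ with hq1
  set q₂ := (starRingEnd ℂ) P₂ with hq2
  set q₃ := (starRingEnd ℂ) P₃ with hq3
  have h12' : P₁ - P₂ ≠ 0 := sub_ne_zero.mpr h12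
  have h23' : P₂ - P₃ ≠ 0 := sub_ne_zero.mpr h23
  have h31' : P₃ - P₁ ≠ 0 := sub_ne_zero.mpr h31
  have c12 : q₁ - q₂ ≠ 0 := sub_ne_zero.mpr fun h => h12 ((starRingEnd ℂ).injective h)
  have c23 : q₂ - q₃ ≠ 0 := sub_ne_zero.mpr fun h => h23 ((starRingEnd ℂ).injective h)
  have c31 : q₃ - q₁ ≠ 0 := sub_ne_zero.mpr fun h => h31 ((starRingEnd ℂ).injective h)
  set L1 := ((q₁ - q₂) * (P₃ - P₁)) / ((P₁ - P₂) * (q₃ - q₁)) with hL1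
  set L2 := ((q₂ - q₃) * (P₁ - P₂)) / ((P₂ - P₃) * (q₁ - q₂)) with hL2
  set L3 := ((q₃ - q₁) * (P₂ - P₃)) / ((P₃ - P₁) * (q₂ - q₃)) with hL3
  set R1 := ((q₁ - (l₁₂ : ℂ) * q₂) * (P₃ - (l₃₁ : ℂ) * P₁)) /
      ((P₁ - (l₁₂ : ℂ) * P₂) * (q₃ - (l₃₁ : ℂ) * q₁)) with hR1
  set R2 := ((q₂ - (l₂₃ : ℂ) * q₃) * (P₁ - (l₁₂ : ℂ) * P₂)) /
      ((P₂ - (l₂₃ : ℂ) * P₃) * (q₁ - (l₁₂ : ℂ) * q₂)) with hR2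
  set R3 := ((q₃ - (l₃₁ : ℂ) * q₁) * (P₂ - (l₂₃ : ℂ) * P₃)) /
      ((P₃ - (l₃₁ : ℂ) * P₁) * (q₂ - (l₂₃ : ℂ) * q₃)) with hR3
  have hLprod : L1 * L2 * L3 = 1 := by
    rw [hL1, hL2, hL3]; field_simp
  have hRprod : R1 * R2 * R3 = 1 := by
    rw [hR1, hR2, hR3, div_mul_div_comm, div_mul_div_comm, div_eq_one_iff_eq (mul_ne_zero (mul_ne_zero (mul_ne_zero hd1 hd1') (mul_ne_zero hd2 hd2')) (mul_ne_zero hd3 hd3'))]; ring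
  have hL1ne : L1 ≠ 0 := div_ne_zero (mul_ne_zero c12 h31') (mul_ne_zero h12' c31)
  have hL2ne : L2 ≠ 0 := div_ne_zero (mul_ne_zero c23 h12') (mul_ne_zero h23' c12)
  rw [hE1] at hLprod hL1ne
  rw [hE2] at hLprod hL2ne
  have := mul_left_cancel₀ (mul_ne_zero hL1ne hL2ne) (hLprod.trans hRprod.symm)
  exact this
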